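/- Let Ω ⊊ ℂ be a domain and γ a rectifiable path in Ω. Then ∫_γ ds/dist(z, ∂Ω) ≥ log(1 + ℓ(γ)/min_{z∈|γ|} dist(z, ∂Ω)), where ℓ(γ) is the Euclidean length of γ. -/

import Mathlib

open Set

/-- `γ : ℝ → ℂ` is a (differentiable) path in `Ω` from `a` to `b`, parametrized on `[0,1]`. -/
def IsPathIn (Ω : Set ℂ) (a b : ℂ) (γ : ℝ → ℂ) : Prop :=
  Differentiable ℝ γ ∧ (∀ t ∈ Icc (0 : ℝ) 1, γ t ∈ Ω) ∧ γ 0 = a ∧ γ 1 = b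

/-- The quasihyperbolic length of a path `γ` (parametrized on `[0,1]`) in `Ω ⊊ ℂ`:
`∫_γ ds / dist(z, ∂Ω)`. -/
noncomputable def qhLength (Ω : Set ℂ) (γ : ℝ → ℂ) : ℝ :=
  ∫ t in (0 : ℝ)..1, ‖deriv γ t‖ / Metric.infDist (γ t) (frontier Ω)

/-- The quasihyperbolic distance in `Ω ⊊ ℂ`: the infimum of quasihyperbolic lengths
of paths in `Ω` joining `a` to `b`. -/
noncomputable def qhDist (Ω : Set ℂ) (a b : ℂ) : ℝ :=
  sInf {L : ℝ | ∃ γ : ℝ → ℂ, IsPathIn Ω a b γ ∧ L = qhLength Ω γ}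

section Aux
open MeasureTheory intervalIntegral


lemma key_ineq (f d : ℝ → ℝ) (a b m : ℝ) (hab : a ≤ b) (hm : 0 < m)
    (hfint : IntervalIntegrable f volume a b)
    (hf0 : ∀ t ∈ Icc a b, 0 ≤ f t)
    (hdcont : ContinuousOn d (Icc a b))
    (hdm : ∀ t ∈ Icc a b, m ≤ d t)
    (hdb : ∀ t ∈ Icc a b, d t ≤ m + ∫ x in a..t, f x) :
    Real.log ((m + ∫ x in a..b, f x) / m) ≤ ∫ t in a..b, f t / d t := by
  have hd_pos : ∀ t ∈ Icc a b, 0 < d t := fun t ht => hm.trans_le (hdm t ht)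
  have hdne : ∀ t ∈ Icc a b, d t ≠ 0 := fun t ht => (hd_pos t ht).ne'
  have hinv : ContinuousOn (fun t => (d t)⁻¹) (Icc a b) := hdcont.inv₀ hdne
  have hinvu : ContinuousOn (fun t => (d t)⁻¹) (uIcc a b) := by
    rwa [uIcc_of_le hab]
  have hfd_int : IntervalIntegrable (fun t => f t / d t) volume a b := by
    simpa [div_eq_mul_inv] using hfint.mul_continuousOn hinvu
  have hL0 : 0 ≤ ∫ x in a..b, f x := integral_nonneg hab hf0
  -- main estimate with epsilon
  have main : ∀ ε : ℝ, 0 < ε →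
      Real.log ((m + ∫ x in a..b, f x) / m) ≤ (∫ t in a..b, f t / d t) + 2 * ε / m := by
    intro ε hε
    -- approximate f in L¹ by a continuous function
    have hfIoc : IntegrableOn f (Ioc a b) volume :=
      (intervalIntegrable_iff_integrableOn_Ioc_of_le hab).mp hfint
    have h_ind : Integrable ((Ioc a b).indicator f) volume :=
      hfIoc.integrable_indicator measurableSet_Ioc
    obtain ⟨g, -, hg_close, hg_cont, hg_int⟩ :=
      h_ind.exists_hasCompactSupport_integral_sub_le hε
    set φ : ℝ → ℝ := fun x => max (g x) 0 with hφ
    have φcont : Continuous φ := hg_cont.max continuous_const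
    have φ0 : ∀ x, 0 ≤ φ x := fun x => le_max_right _ _
    have φint : ∀ u v : ℝ, IntervalIntegrable φ volume u v := fun u v =>
      φcont.intervalIntegrable u v
    -- closeness of φ to f on subintervals
    have habs_int : Integrable (fun x => ‖(Ioc a b).indicator f x - g x‖) volume :=
      (h_ind.sub hg_int).norm
    have hclose : ∀ t ∈ Icc a b, (∫ x in a..t, |f x - φ x|) ≤ ε := by
      intro t ht
      have h1 : (∫ x in a..t, |f x - φ x|) = ∫ x in Ioc a t, |f x - φ x| := by
        rw [intervalIntegral.integral_of_le ht.1]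
      have hsub : Ioc a t ⊆ Ioc a b := Ioc_subset_Ioc le_rfl ht.2
      have hint1 : IntegrableOn (fun x => |f x - φ x|) (Ioc a t) volume :=
        ((hfIoc.mono_set hsub).sub ((φcont.integrableOn_Ioc))).abs
      have h2 : (∫ x in Ioc a t, |f x - φ x|) ≤
          ∫ x in Ioc a t, ‖(Ioc a b).indicator f x - g x‖ := by
        apply setIntegral_mono_on hint1 (habs_int.integrableOn) measurableSet_Ioc
        intro x hx
        have hx' : x ∈ Ioc a b := hsub hx
        rw [indicator_of_mem hx']
        have hfx : 0 ≤ f x := hf0 x ⟨hx'.1.le, hx'.2⟩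
        rw [Real.norm_eq_abs]
        rcases le_or_gt 0 (g x) with h | h
        · simp [hφ, max_eq_left h]
        · rw [hφ]
          simp only [max_eq_right h.le]
          rw [sub_zero, abs_of_nonneg hfx]
          have h6 : f x ≤ f x - g x := by linarith
          exact h6.trans (le_abs_self _)
      have h3 : (∫ x in Ioc a t, ‖(Ioc a b).indicator f x - g x‖) ≤
          ∫ x, ‖(Ioc a b).indicator f x - g x‖ := by
        apply setIntegral_le_integral habs_int
        filter_upwards with x using norm_nonneg _
      rw [h1]
      exact (h2.trans h3).trans hg_close
    -- the primitive of φ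
    set s : ℝ → ℝ := fun t => ∫ x in a..t, φ x with hs
    have hs_deriv : ∀ t : ℝ, HasDerivAt s (φ t) t := by
      intro t
      exact intervalIntegral.integral_hasDerivAt_right (φint a t)
        (φcont.stronglyMeasurableAtFilter volume (nhds t)) φcont.continuousAt
    have hs_cont : Continuous s := by
      apply continuous_iff_continuousAt.2 fun t => (hs_deriv t).continuousAt
    have hs0 : ∀ t ∈ Icc a b, 0 ≤ s t := fun t ht =>
      integral_nonneg ht.1 (fun x _ => φ0 x)
    have hpos : ∀ t ∈ Icc a b, 0 < m + ε + s t := fun t ht => by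
      have := hs0 t ht; linarith
    -- d t ≤ m + ε + s t on [a,b]
    have hd_le : ∀ t ∈ Icc a b, d t ≤ m + ε + s t := by
      intro t ht
      have hfi : IntervalIntegrable f volume a t :=
        hfint.mono_set (by rw [uIcc_of_le hab, uIcc_of_le ht.1]; exact Icc_subset_Icc le_rfl ht.2)
      have habsi : IntervalIntegrable (fun x => |f x - φ x|) volume a t :=
        (hfi.sub (φint a t)).abs
      have h4 : (∫ x in a..t, f x) - s t = ∫ x in a..t, (f x - φ x) :=
        (intervalIntegral.integral_sub hfi (φint a t)).symm
      have h5 : (∫ x in a..t, (f x - φ x)) ≤ ∫ x in a..t, |f x - φ x| := by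
        apply intervalIntegral.integral_mono_on ht.1 (hfi.sub (φint a t)) habsi
        intro x _; exact le_abs_self _
      have := hclose t ht
      have := hdb t ht
      linarith
    -- FTC computation
    set H : ℝ → ℝ := fun t => Real.log (m + ε + s t) with hH
    have hHderiv : ∀ t ∈ uIcc a b, HasDerivAt H (φ t / (m + ε + s t)) t := by
      intro t ht
      rw [uIcc_of_le hab] at ht
      have h1 : HasDerivAt (fun u => m + ε + s u) (φ t) t := by
        simpa using (hs_deriv t).const_add (m + ε)
      have h2 := (Real.hasDerivAt_log (hpos t ht).ne').comp t h1
      exact h2.congr_deriv (div_eq_inv_mul _ _).symm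
    have hcont_int : ContinuousOn (fun t => φ t / (m + ε + s t)) (uIcc a b) := by
      rw [uIcc_of_le hab]
      exact φcont.continuousOn.div ((continuous_const.add hs_cont).continuousOn)
        (fun t ht => (hpos t ht).ne')
    have hFTC : (∫ t in a..b, φ t / (m + ε + s t)) = H b - H a :=
      intervalIntegral.integral_eq_sub_of_hasDerivAt hHderiv hcont_int.intervalIntegrable
    have hsa : s a = 0 := intervalIntegral.integral_same
    have hHa : H a = Real.log (m + ε) := by rw [hH]; simp [hsa]
    -- I1 : ∫ φ/(m+ε+s) ≤ ∫ φ/d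
    have hφd_int : IntervalIntegrable (fun t => φ t / d t) volume a b := by
      apply ContinuousOn.intervalIntegrable
      rw [uIcc_of_le hab]
      exact φcont.continuousOn.div hdcont hdne
    have hI1 : (∫ t in a..b, φ t / (m + ε + s t)) ≤ ∫ t in a..b, φ t / d t := by
      apply intervalIntegral.integral_mono_on hab hcont_int.intervalIntegrable hφd_int
      intro t ht
      have h1 := hd_le t ht
      have h2 := hd_pos t ht
      have h3 := φ0 t
      gcongr
    -- I2 : ∫ φ/d ≤ ∫ f/d + ε/m
    have habs_int2 : IntervalIntegrable (fun x => |f x - φ x|) volume a b :=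
      (hfint.sub (φint a b)).abs
    have habsd_int : IntervalIntegrable (fun x => |f x - φ x| / d x) volume a b := by
      simpa [div_eq_mul_inv] using habs_int2.mul_continuousOn hinvu
    have hI2a : (∫ t in a..b, φ t / d t) ≤
        (∫ t in a..b, f t / d t) + ∫ t in a..b, |f t - φ t| / d t := by
      rw [← intervalIntegral.integral_add hfd_int habsd_int]
      apply intervalIntegral.integral_mono_on hab hφd_int (hfd_int.add habsd_int)
      intro t ht
      have h2 := hd_pos t ht
      rw [← add_div, div_le_div_iff_of_pos_right h2]
      have : φ t - f t ≤ |f t - φ t| := by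
        rw [abs_sub_comm]; exact le_abs_self _
      linarith
    have hI2b : (∫ t in a..b, |f t - φ t| / d t) ≤ ε / m := by
      have h1 : (∫ t in a..b, |f t - φ t| / d t) ≤ ∫ t in a..b, |f t - φ t| / m := by
        apply intervalIntegral.integral_mono_on hab habsd_int (habs_int2.div_const m)
        intro t ht
        have h4 := hdm t ht
        have h5 : (0:ℝ) ≤ |f t - φ t| := abs_nonneg _
        gcongr
      have h2 : (∫ t in a..b, |f t - φ t| / m) = (∫ t in a..b, |f t - φ t|) / m :=
        intervalIntegral.integral_div m _
      rw [h2] at h1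
      have h3 := hclose b ⟨hab, le_rfl⟩
      exact h1.trans (by gcongr)
    -- I3 : H b ≥ log (m + ∫ f)
    have hsb : (∫ x in a..b, f x) - ε ≤ s b := by
      have h4 : (∫ x in a..b, f x) - s b = ∫ x in a..b, (f x - φ x) :=
        (intervalIntegral.integral_sub hfint (φint a b)).symm
      have h5 : (∫ x in a..b, (f x - φ x)) ≤ ∫ x in a..b, |f x - φ x| := by
        apply intervalIntegral.integral_mono_on hab (hfint.sub (φint a b)) habs_int2
        intro x _; exact le_abs_self _
      have := hclose b ⟨hab, le_rfl⟩
      linarith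
    have hI3 : Real.log (m + ∫ x in a..b, f x) ≤ H b := by
      rw [hH]
      apply Real.log_le_log (by linarith)
      linarith
    -- conclusion
    have hlogm : Real.log (m + ε) - Real.log m ≤ ε / m := by
      rw [← Real.log_div (by linarith) hm.ne']
      have h := Real.log_le_sub_one_of_pos (show (0:ℝ) < (m + ε)/m by positivity)
      have : (m + ε) / m - 1 = ε / m := by field_simp; ring
      linarith
    have hsplit : Real.log ((m + ∫ x in a..b, f x) / m) =
        Real.log (m + ∫ x in a..b, f x) - Real.log m :=
      Real.log_div (by linarith) hm.ne'
    rw [hsplit]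
    have : Real.log (m + ∫ x in a..b, f x) - Real.log (m + ε) ≤ (∫ t in a..b, f t / d t) + ε / m := by
      have := hFTC
      have h6 : (∫ t in a..b, φ t / (m + ε + s t)) = H b - Real.log (m + ε) := by
        rw [hFTC, hHa]
      linarith [hI1, hI2a, hI2b, hI3]
    have h7 : 2 * ε / m = ε / m + ε / m := by ring
    linarith
  -- conclude by letting ε → 0
  refine le_of_forall_pos_le_add fun ε' hε' => ?_
  have h := main (ε' * m / 2) (by positivity)
  have : 2 * (ε' * m / 2) / m = ε' := by field_simp
  linarith

lemma key_ineq' (f d : ℝ → ℝ) (a b m : ℝ) (hab : a ≤ b) (hm : 0 < m)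
    (hfint : IntervalIntegrable f volume a b)
    (hf0 : ∀ t ∈ Icc a b, 0 ≤ f t)
    (hdcont : ContinuousOn d (Icc a b))
    (hdm : ∀ t ∈ Icc a b, m ≤ d t)
    (hdb : ∀ t ∈ Icc a b, d t ≤ m + ∫ x in t..b, f x) :
    Real.log ((m + ∫ x in a..b, f x) / m) ≤ ∫ t in a..b, f t / d t := by
  set c := a + b with hc
  have hca : c - a = b := by rw [hc]; ring
  have hcb : c - b = a := by rw [hc]; ring
  have hmem : ∀ t ∈ Icc a b, c - t ∈ Icc a b := fun t ht =>
    ⟨by simp only [hc]; linarith [ht.2], by simp only [hc]; linarith [ht.1]⟩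
  have h1 : ∀ (g : ℝ → ℝ) (t : ℝ), (∫ x in a..t, g (c - x)) = ∫ x in (c - t)..b, g x := by
    intro g t
    rw [intervalIntegral.integral_comp_sub_left g c, hca]
  have hfint' : IntervalIntegrable (fun x => f (c - x)) volume a b := by
    have := (hfint.comp_sub_left c).symm
    rwa [hca, hcb] at this
  have key := key_ineq (fun x => f (c - x)) (fun x => d (c - x)) a b m hab hm hfint'
    (fun t ht => hf0 _ (hmem t ht))
    (hdcont.comp ((continuous_const.sub continuous_id).continuousOn) hmem)
    (fun t ht => hdm _ (hmem t ht))
    (fun t ht => by rw [h1 f t]; exact hdb _ (hmem t ht))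
  have e1 : (∫ x in a..b, f (c - x)) = ∫ x in a..b, f x := by
    rw [h1 f b, hcb]
  have e2 : (∫ t in a..b, f (c - t) / d (c - t)) = ∫ t in a..b, f t / d t := by
    have := h1 (fun t => f t / d t) b
    rw [hcb] at this
    exact this
  rw [e1, e2] at key
  exact key

open Metric in
theorem qh_length_lower_bound'
    (Ω : Set ℂ) (hΩo : IsOpen Ω) (hΩc : IsConnected Ω)
    (hne : Ω.Nonempty) (hprop : Ω ≠ Set.univ)
    (γ : ℝ → ℂ) (hγ : Differentiable ℝ γ)
    (hmem : ∀ t ∈ Icc (0 : ℝ) 1, γ t ∈ Ω) :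
    Real.log (1 + (∫ t in (0 : ℝ)..1, ‖deriv γ t‖) /
        sInf ((fun t => Metric.infDist (γ t) (frontier Ω)) '' Icc (0 : ℝ) 1)) ≤
      (∫ t in (0 : ℝ)..1, ‖deriv γ t‖ / Metric.infDist (γ t) (frontier Ω)) := by
  set E := frontier Ω with hE
  set d : ℝ → ℝ := fun t => Metric.infDist (γ t) E with hd
  set m := sInf (d '' Icc (0:ℝ) 1) with hm
  set f : ℝ → ℝ := fun t => ‖deriv γ t‖ with hf
  -- the frontier is nonempty and closed
  have hEne : E.Nonempty := by
    by_contra h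
    rw [not_nonempty_iff_eq_empty] at h
    have hclopen : IsClopen Ω := isClopen_iff_frontier_eq_empty.mpr h
    rcases isClopen_iff.mp hclopen with h1 | h1
    · exact hne.ne_empty h1
    · exact hprop h1
  have hEc : IsClosed E := isClosed_frontier
  have hdcont : Continuous d := (continuous_infDist_pt E).comp hγ.continuous
  have hcomp : IsCompact (d '' Icc (0:ℝ) 1) := isCompact_Icc.image hdcont
  have hne' : (d '' Icc (0:ℝ) 1).Nonempty :=
    ⟨d 0, mem_image_of_mem _ ⟨le_rfl, zero_le_one⟩⟩
  obtain ⟨t₁, ht₁, hdt₁⟩ := hcomp.sInf_mem hne'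
  have hm_le : ∀ t ∈ Icc (0:ℝ) 1, m ≤ d t := fun t ht =>
    csInf_le hcomp.bddBelow (mem_image_of_mem _ ht)
  have hmpos : 0 < m := by
    rw [hm, ← hdt₁]
    rw [← IsClosed.notMem_iff_infDist_pos hEc hEne]
    intro hmemE
    have := hmem t₁ ht₁
    rw [hE, hΩo.frontier_eq] at hmemE
    exact hmemE.2 this
  by_cases hfint : IntervalIntegrable f volume 0 1
  · -- integrable case
    have hderiv_int : IntervalIntegrable (deriv γ) volume 0 1 := by
      rw [intervalIntegrable_iff] at hfint ⊢
      exact (integrable_norm_iff ((measurable_deriv γ).aestronglyMeasurable.restrict)).mp hfint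
    -- distance estimates
    have hdist : ∀ u v : ℝ, u ∈ Icc (0:ℝ) 1 → v ∈ Icc (0:ℝ) 1 → u ≤ v →
        dist (γ v) (γ u) ≤ ∫ x in u..v, f x := by
      intro u v hu hv huv
      have hsub : uIcc u v ⊆ uIcc (0:ℝ) 1 := by
        rw [uIcc_of_le huv, uIcc_of_le zero_le_one]
        exact Icc_subset_Icc hu.1 hv.2
      have hFTC : (∫ x in u..v, deriv γ x) = γ v - γ u :=
        intervalIntegral.integral_deriv_eq_sub (fun x _ => hγ x) (hderiv_int.mono_set hsub)
      rw [dist_eq_norm, ← hFTC]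
      exact intervalIntegral.norm_integral_le_integral_norm huv
    have hfd_int : IntervalIntegrable (fun t => f t / d t) volume 0 1 := by
      have hinv : ContinuousOn (fun t => (d t)⁻¹) (uIcc (0:ℝ) 1) := by
        apply (hdcont.continuousOn).inv₀
        intro t ht
        rw [uIcc_of_le zero_le_one] at ht
        exact (hmpos.trans_le (hm_le t ht)).ne'
      simpa [div_eq_mul_inv] using hfint.mul_continuousOn hinv
    have hIcc1 : Icc (0:ℝ) t₁ ⊆ Icc (0:ℝ) 1 := Icc_subset_Icc le_rfl ht₁.2
    have hIcc2 : Icc t₁ (1:ℝ) ⊆ Icc (0:ℝ) 1 := Icc_subset_Icc ht₁.1 le_rfl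
    have hu1 : uIcc (0:ℝ) t₁ ⊆ uIcc (0:ℝ) 1 := by
      rw [uIcc_of_le ht₁.1, uIcc_of_le zero_le_one]; exact hIcc1
    have hu2 : uIcc t₁ (1:ℝ) ⊆ uIcc (0:ℝ) 1 := by
      rw [uIcc_of_le ht₁.2, uIcc_of_le zero_le_one]; exact hIcc2
    have hf0 : ∀ t, 0 ≤ f t := fun t => norm_nonneg _
    -- left piece
    have hleft : Real.log ((m + ∫ x in (0:ℝ)..t₁, f x) / m) ≤ ∫ t in (0:ℝ)..t₁, f t / d t := by
      apply key_ineq' f d 0 t₁ m ht₁.1 hmpos (hfint.mono_set hu1)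
        (fun t _ => hf0 t) (hdcont.continuousOn.mono hIcc1)
        (fun t ht => hm_le t (hIcc1 ht))
      intro t ht
      have ht' : t ∈ Icc (0:ℝ) 1 := hIcc1 ht
      have h1 : d t ≤ d t₁ + dist (γ t) (γ t₁) := infDist_le_infDist_add_dist
      have h2 : dist (γ t) (γ t₁) ≤ ∫ x in t..t₁, f x := by
        rw [dist_comm]
        exact hdist t t₁ ht' ht₁ ht.2
      calc d t ≤ d t₁ + dist (γ t) (γ t₁) := infDist_le_infDist_add_dist
        _ ≤ m + ∫ x in t..t₁, f x := by rw [hdt₁]; linarith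
    -- right piece
    have hright : Real.log ((m + ∫ x in t₁..(1:ℝ), f x) / m) ≤ ∫ t in t₁..(1:ℝ), f t / d t := by
      apply key_ineq f d t₁ 1 m ht₁.2 hmpos (hfint.mono_set hu2)
        (fun t _ => hf0 t) (hdcont.continuousOn.mono hIcc2)
        (fun t ht => hm_le t (hIcc2 ht))
      intro t ht
      have ht' : t ∈ Icc (0:ℝ) 1 := hIcc2 ht
      have h2 : dist (γ t) (γ t₁) ≤ ∫ x in t₁..t, f x := hdist t₁ t ht₁ ht' ht.1
      calc d t ≤ d t₁ + dist (γ t) (γ t₁) := infDist_le_infDist_add_dist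
        _ ≤ m + ∫ x in t₁..t, f x := by rw [hdt₁]; linarith
    -- combine
    set A := ∫ x in (0:ℝ)..t₁, f x with hA
    set B := ∫ x in t₁..(1:ℝ), f x with hB
    have hA0 : 0 ≤ A := intervalIntegral.integral_nonneg ht₁.1 (fun t _ => hf0 t)
    have hB0 : 0 ≤ B := intervalIntegral.integral_nonneg ht₁.2 (fun t _ => hf0 t)
    have hsum : A + B = ∫ x in (0:ℝ)..1, f x :=
      intervalIntegral.integral_add_adjacent_intervals
        (hfint.mono_set hu1) (hfint.mono_set hu2)
    have hsumd : (∫ t in (0:ℝ)..t₁, f t / d t) + ∫ t in t₁..(1:ℝ), f t / d t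
        = ∫ t in (0:ℝ)..1, f t / d t :=
      intervalIntegral.integral_add_adjacent_intervals
        (hfd_int.mono_set hu1) (hfd_int.mono_set hu2)
    have hfrac : 1 + (∫ t in (0:ℝ)..1, f t) / m = (m + (A + B)) / m := by
      rw [hsum]; field_simp
    have hlog : Real.log ((m + (A + B)) / m) ≤
        Real.log ((m + A) / m) + Real.log ((m + B) / m) := by
      rw [← Real.log_mul (by positivity) (by positivity)]
      apply Real.log_le_log (by positivity)
      rw [div_mul_div_comm, div_le_div_iff₀ (by positivity) (by positivity)]
      nlinarith [mul_nonneg hA0 hB0, hmpos.le, mul_pos hmpos hmpos]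
    calc Real.log (1 + (∫ t in (0:ℝ)..1, f t) / m) = Real.log ((m + (A + B)) / m) := by
          rw [hfrac]
      _ ≤ Real.log ((m + A) / m) + Real.log ((m + B) / m) := hlog
      _ ≤ (∫ t in (0:ℝ)..t₁, f t / d t) + ∫ t in t₁..(1:ℝ), f t / d t :=
          add_le_add hleft hright
      _ = ∫ t in (0:ℝ)..1, f t / d t := hsumd
  · -- non-integrable case: the length integral is zero
    have hzero : (∫ t in (0:ℝ)..1, f t) = 0 := intervalIntegral.integral_undef hfint
    rw [hzero, zero_div, add_zero, Real.log_one]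
    exact intervalIntegral.integral_nonneg zero_le_one
      (fun t _ => div_nonneg (norm_nonneg _) Metric.infDist_nonneg)

end Aux

/-- For any (differentiable) path `γ` in a domain `Ω ⊊ ℂ`, the quasihyperbolic length
satisfies `∫_γ ds/dist(z,∂Ω) ≥ log(1 + ℓ(γ)/min_{z ∈ |γ|} dist(z,∂Ω))`. -/
theorem qh_length_lower_bound
    (Ω : Set ℂ) (hΩo : IsOpen Ω) (hΩc : IsConnected Ω)
    (hne : Ω.Nonempty) (hprop : Ω ≠ Set.univ)
    (γ : ℝ → ℂ) (hγ : Differentiable ℝ γ)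
    (hmem : ∀ t ∈ Icc (0 : ℝ) 1, γ t ∈ Ω) :
    Real.log (1 + (∫ t in (0 : ℝ)..1, ‖deriv γ t‖) /
        sInf ((fun t => Metric.infDist (γ t) (frontier Ω)) '' Icc (0 : ℝ) 1)) ≤
      qhLength Ω γ := by
  exact qh_length_lower_bound' Ω hΩo hΩc hne hprop γ hγ hmem
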